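/- Let G be a group, H a subgroup of G, and σ₁ : G → G a group automorphism with σ₁ ∘ σ₁ = id such that σ₁(H) = H. Let c ∈ G with c·σ₁(c) ∈ Z(G), and let σ₂ = inn_c ∘ σ₁ (so σ₂ is again an involutive automorphism). Then: (i) there exists a σ₁-equivariant real structure on G/H; and (ii) there exists a σ₂-equivariant real structure on G/H if and only if there exists n ∈ N_G(H) such that c·σ₁(c)·σ₁(n)·n ∈ H. -/

import Mathlib

/-- A `σ`-equivariant real structure on the homogeneous space `G/H`: a map
`μ : G/H → G/H` with `μ ∘ μ = id` and `μ(g·x) = σ(g)·μ(x)`. -/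
def IsEquivRealStructure {G : Type*} [Group G] (σ : G →* G) (H : Subgroup G)
    (μ : G ⧸ H → G ⧸ H) : Prop :=
  (∀ x, μ (μ x) = x) ∧ ∀ (g : G) (x : G ⧸ H), μ (g • x) = σ g • μ x

/-- Auxiliary: build an equivariant real structure `gH ↦ σ(g)·a·H`. -/
theorem buildMu {G : Type*} [Group G] (H : Subgroup G) (σ : G →* G)
    (hσ : ∀ g, σ (σ g) = g) (a : G)
    (hwd : ∀ h ∈ H, a⁻¹ * σ h * a ∈ H) (hb : σ a * a ∈ H) :
    ∃ μ : G ⧸ H → G ⧸ H, IsEquivRealStructure σ H μ := by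
  refine ⟨Quotient.map' (fun g => σ g * a) (fun g₁ g₂ h12 => ?_), ?_, ?_⟩
  · rw [QuotientGroup.leftRel_apply] at *
    have : (σ g₁ * a)⁻¹ * (σ g₂ * a) = a⁻¹ * σ (g₁⁻¹ * g₂) * a := by
      rw [map_mul, map_inv]; group
    rw [this]
    exact hwd _ h12
  · intro x
    induction x using Quotient.inductionOn' with
    | h g =>
      show ((σ (σ g * a) * a : G) : G ⧸ H) = ((g : G) : G ⧸ H)
      rw [QuotientGroup.eq]
      have : (σ (σ g * a) * a)⁻¹ * g = (σ a * a)⁻¹ := by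
        rw [map_mul, hσ]; group
      rw [this]
      exact inv_mem hb
  · intro g x
    induction x using Quotient.inductionOn' with
    | h y =>
      show ((σ (g * y) * a : G) : G ⧸ H) = σ g • ((σ y * a : G) : G ⧸ H)
      have : σ (g * y) * a = σ g * (σ y * a) := by rw [map_mul]; group
      rw [this]
      rfl

/-- **Lemma 2.6.** Let `σ₁` be an involutive automorphism of `G` with `σ₁(H) = H`, and
let `σ₂ = inn_c ∘ σ₁` with `c·σ₁(c) ∈ Z(G)`. Then (i) `G/H` admits a `σ₁`-equivariant
real structure; and (ii) `G/H` admits a `σ₂`-equivariant real structure iff there is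
`n ∈ N_G(H)` with `c·σ₁(c)·σ₁(n)·n ∈ H`. -/
theorem equivRealStructure_innerTwist {G : Type*} [Group G] (H : Subgroup G)
    (σ₁ : G →* G) (hσ : ∀ g, σ₁ (σ₁ g) = g) (hH : H.map σ₁ = H)
    (c : G) (hc : c * σ₁ c ∈ Subgroup.center G) :
    (∃ μ : G ⧸ H → G ⧸ H, IsEquivRealStructure σ₁ H μ) ∧
    ((∃ μ : G ⧸ H → G ⧸ H,
        IsEquivRealStructure ((MulAut.conj c).toMonoidHom.comp σ₁) H μ) ↔
      ∃ n ∈ Subgroup.normalizer (H : Set G), c * σ₁ c * σ₁ n * n ∈ H) := by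
  have hmem : ∀ g : G, g ∈ H ↔ σ₁ g ∈ H := by
    intro g
    constructor
    · intro hg; rw [← hH]; exact ⟨g, hg, rfl⟩
    · intro hg
      have : σ₁ (σ₁ g) ∈ H.map σ₁ := ⟨σ₁ g, hg, rfl⟩
      rwa [hH, hσ] at this
  set σ₂ : G →* G := (MulAut.conj c).toMonoidHom.comp σ₁ with hσ₂def
  have hσ₂ : ∀ g, σ₂ g = c * σ₁ g * c⁻¹ := fun g => rfl
  have hz := Subgroup.mem_center_iff.mp hc
  have hσ₂inv : ∀ g, σ₂ (σ₂ g) = g := by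
    intro g
    have e1 : σ₂ (σ₂ g) = (c * σ₁ c) * g * (c * σ₁ c)⁻¹ := by
      rw [hσ₂, hσ₂, map_mul, map_mul, map_inv, hσ]; group
    rw [e1, ← hz g]; group
  constructor
  · -- part (i)
    exact buildMu H σ₁ hσ 1 (by simpa using fun h hh => (hmem h).mp hh)
      (by simpa using (hmem 1).mp H.one_mem)
  constructor
  · -- forward direction of (ii)
    rintro ⟨μ, hinv, hequiv⟩
    obtain ⟨a, ha⟩ := QuotientGroup.mk_surjective (μ ((1 : G) : G ⧸ H))
    have hsm : ∀ g : G, ((g : G) : G ⧸ H) = g • ((1 : G) : G ⧸ H) := by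
      intro g
      show _ = ((g * 1 : G) : G ⧸ H)
      rw [mul_one]
    -- F1
    have F1 : ∀ h ∈ H, a⁻¹ * σ₂ h * a ∈ H := by
      intro h hh
      have e1 : ((h : G) : G ⧸ H) = ((1 : G) : G ⧸ H) := by
        rw [QuotientGroup.eq]; simpa using inv_mem hh
      have e2 : μ ((h : G) : G ⧸ H) = ((σ₂ h * a : G) : G ⧸ H) := by
        rw [hsm h, hequiv, ← ha]
        rfl
      rw [e1, ← ha] at e2
      have := (QuotientGroup.eq).mp e2
      simpa [mul_assoc] using this
    -- F2
    have F2 : σ₂ a * a ∈ H := by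
      have e2 : μ ((a : G) : G ⧸ H) = ((σ₂ a * a : G) : G ⧸ H) := by
        rw [hsm a, hequiv, ← ha]
        rfl
      have e3 : ((σ₂ a * a : G) : G ⧸ H) = ((1 : G) : G ⧸ H) := by
        rw [← e2, ha, hinv]
      have := (QuotientGroup.eq).mp e3
      simpa using inv_mem this
    set n : G := c⁻¹ * a with hn
    have hnorm : n ∈ Subgroup.normalizer (H : Set G) := by
      rw [Subgroup.mem_normalizer_iff]
      intro h
      constructor
      · intro hh
        set b : G := σ₂ a * a with hb
        have h1 : b * h * b⁻¹ ∈ H := H.mul_mem (H.mul_mem F2 hh) (inv_mem F2)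
        have h2 : a⁻¹ * σ₂ (b * h * b⁻¹) * a ∈ H := F1 _ h1
        have h3 : σ₁ (a⁻¹ * σ₂ (b * h * b⁻¹) * a) ∈ H := (hmem _).mp h2
        have hb2 : σ₂ b = a * σ₂ a := by
          rw [hb, map_mul, hσ₂inv]
        have e4 : a⁻¹ * σ₂ (b * h * b⁻¹) * a = σ₂ (a * h * a⁻¹) := by
          rw [map_mul, map_mul, map_inv, hb2, map_mul, map_mul, map_inv]
          group
        have e6 : σ₁ (σ₂ (a * h * a⁻¹)) = σ₁ c * (a * h * a⁻¹) * (σ₁ c)⁻¹ := by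
          rw [hσ₂, map_mul, map_mul, map_inv, hσ]
        have e7 : σ₁ c * (a * h * a⁻¹) * (σ₁ c)⁻¹ = n * h * n⁻¹ := by
          have h8 : σ₁ c * (a * h * a⁻¹) * (σ₁ c)⁻¹ =
              c⁻¹ * ((c * σ₁ c) * (a * h * a⁻¹) * (c * σ₁ c)⁻¹) * c := by group
          rw [h8, ← hz (a * h * a⁻¹), hn]; group
        have key : n * h * n⁻¹ = σ₁ (a⁻¹ * σ₂ (b * h * b⁻¹) * a) := by
          rw [e4, e6, e7]
        rw [key]; exact h3
      · intro hh
        have h4 : σ₁ (n * h * n⁻¹) ∈ H := (hmem _).mp hh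
        have h5 : a⁻¹ * σ₂ (σ₁ (n * h * n⁻¹)) * a ∈ H := F1 _ h4
        have key : a⁻¹ * σ₂ (σ₁ (n * h * n⁻¹)) * a = h := by
          rw [hσ₂, hσ, hn]
          group
        rwa [key] at h5
    refine ⟨n, hnorm, ?_⟩
    have key : c * σ₁ c * σ₁ n * n = σ₂ a * a := by
      rw [hσ₂, hn, map_mul, map_inv]
      group
    rw [key]; exact F2
  · -- backward direction of (ii)
    rintro ⟨n, hnorm, hn⟩
    apply buildMu H σ₂ hσ₂inv (c * n)
    · intro h hh
      have e1 : (c * n)⁻¹ * σ₂ h * (c * n) = n⁻¹ * σ₁ h * n := by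
        rw [hσ₂]; group
      rw [e1]
      have hnn : n⁻¹ ∈ Subgroup.normalizer (H : Set G) := inv_mem hnorm
      rw [Subgroup.mem_normalizer_iff] at hnn
      have := (hnn (σ₁ h)).mp ((hmem h).mp hh)
      simpa using this
    · have e1 : σ₂ (c * n) * (c * n) = c * σ₁ c * σ₁ n * n := by
        rw [hσ₂, map_mul]; group
      rw [e1]; exact hn
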